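/- Suppose the annealed large deviation principle holds: for a probability measure ν and small ε > 0, lim_{n→∞} (1/n) log (P̃ ⊗ ν)(S_n > nε) = −c(ε) with c(ε) > 0. Then for P̃-almost every ω, limsup_{n→∞} (1/n) log ν({x : S_n(ω, x) > nε}) ≤ −c(ε) (quenched upper large deviation bound). -/

import Mathlib

open MeasureTheory Filter
open scoped ENNReal
set_option maxHeartbeats 800000

/-- Random orbit: `randIter T ω n x = T_{ω (n-1)} ∘ ⋯ ∘ T_{ω 0} (x)`. -/
def randIter {X Ω : Type*} (T : Ω → X → X) (ω : ℕ → Ω) : ℕ → X → X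
  | 0, x => x
  | n + 1, x => T (ω n) (randIter T ω n x)

/-- Measurability of the random orbit in the pair `(ω, x)`. -/
lemma measurable_randIter {X Ω : Type*} [MeasurableSpace X] [MeasurableSpace Ω]
    (T : Ω → X → X) (hT : Measurable fun q : Ω × X => T q.1 q.2) (k : ℕ) :
    Measurable fun p : (ℕ → Ω) × X => randIter T p.1 k p.2 := by
  induction k with
  | zero => exact measurable_snd
  | succ n ih =>
    exact hT.comp (((measurable_pi_apply n).comp measurable_fst).prodMk ih)

/-- Key quantitative step: Markov inequality + Borel–Cantelli gives, for every `0 < a < c`,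
an a.e. eventual bound `log ν(section) / n ≤ -a`. -/
lemma aux_eventual_bound {Ω' X : Type*} [MeasurableSpace Ω'] [MeasurableSpace X]
    (P : Measure Ω') [IsProbabilityMeasure P] (ν : Measure X) [IsProbabilityMeasure ν]
    (B : ℕ → Set (Ω' × X)) (hB : ∀ n, MeasurableSet (B n))
    (c a : ℝ) (ha : 0 < a) (hac : a < c)
    (hLDP : Tendsto (fun n : ℕ => ENNReal.log ((P.prod ν) (B n)) / (n : EReal))
      atTop (nhds ((-c : ℝ) : EReal))) :
    ∀ᵐ ω ∂P, ∀ᶠ n in atTop,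
      ENNReal.log (ν (Prod.mk ω ⁻¹' B n)) / (n : EReal) ≤ ((-a : ℝ) : EReal) := by
  set b : ℝ := (a + c) / 2 with hb
  have hab : a < b := by rw [hb]; linarith
  have hbc : b < c := by rw [hb]; linarith
  set g : ℕ → Ω' → ℝ≥0∞ := fun n ω => ν (Prod.mk ω ⁻¹' B n) with hg
  have hgm : ∀ n, Measurable (g n) := fun n => measurable_measure_prodMk_left (hB n)
  set A : ℕ → Set Ω' := fun n => {ω | ENNReal.ofReal (Real.exp ((n : ℝ) * (-a))) ≤ g n ω}
    with hA
  -- eventual annealed bound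
  have hcb : ((-c : ℝ) : EReal) < ((-b : ℝ) : EReal) := by
    exact_mod_cast (by linarith : -c < -b)
  have hev : ∀ᶠ n : ℕ in atTop,
      (P.prod ν) (B n) ≤ ENNReal.ofReal (Real.exp ((n : ℝ) * (-b))) := by
    filter_upwards [hLDP.eventually_lt_const hcb, eventually_ge_atTop 1] with n h1 h2
    have hn0 : (0 : EReal) < (n : EReal) := by
      exact_mod_cast Nat.cast_pos.mpr h2
    have hnt : (n : EReal) ≠ ⊤ := by
      exact EReal.natCast_ne_top n
    have := (EReal.div_le_iff_le_mul hn0 hnt).mp h1.le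
    have hlog : ENNReal.log ((P.prod ν) (B n))
        ≤ ENNReal.log (ENNReal.ofReal (Real.exp ((n : ℝ) * (-b)))) := by
      rw [ENNReal.log_ofReal_of_pos (Real.exp_pos _), Real.log_exp]
      calc ENNReal.log ((P.prod ν) (B n)) ≤ (n : EReal) * ((-b : ℝ) : EReal) := this
        _ = (((n : ℝ) * (-b) : ℝ) : EReal) := by
            rw [← EReal.coe_coe_eq_natCast, ← EReal.coe_mul]
    exact ENNReal.log_le_log_iff.mp hlog
  -- Markov inequality
  have hMarkov : ∀ n : ℕ,
      P (A n) ≤ (P.prod ν) (B n) / ENNReal.ofReal (Real.exp ((n : ℝ) * (-a))) := by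
    intro n
    have hprod : (P.prod ν) (B n) = ∫⁻ ω, g n ω ∂P := Measure.prod_apply (hB n)
    rw [hprod]
    exact meas_ge_le_lintegral_div (hgm n).aemeasurable
      (by positivity) ENNReal.ofReal_ne_top
  -- geometric bound
  set r : ℝ≥0∞ := ENNReal.ofReal (Real.exp (a - b)) with hr
  have hr1 : r < 1 := by
    rw [hr, ← ENNReal.ofReal_one]
    exact ENNReal.ofReal_lt_ofReal_iff_of_nonneg (Real.exp_pos _).le |>.mpr
      (by rw [← Real.exp_zero]; exact Real.exp_lt_exp.mpr (by linarith))
  have hgeom : ∀ᶠ n : ℕ in atTop, P (A n) ≤ r ^ n := by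
    filter_upwards [hev] with n h1
    calc P (A n) ≤ (P.prod ν) (B n) / ENNReal.ofReal (Real.exp ((n : ℝ) * (-a))) :=
          hMarkov n
      _ ≤ ENNReal.ofReal (Real.exp ((n : ℝ) * (-b)))
            / ENNReal.ofReal (Real.exp ((n : ℝ) * (-a))) :=
          ENNReal.div_le_div_right h1 _
      _ = ENNReal.ofReal (Real.exp ((n : ℝ) * (-b)) / Real.exp ((n : ℝ) * (-a))) :=
          (ENNReal.ofReal_div_of_pos (Real.exp_pos _)).symm
      _ = ENNReal.ofReal (Real.exp ((n : ℝ) * (a - b))) := by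
          rw [← Real.exp_sub]
          congr 2
          ring
      _ = r ^ n := by
          rw [hr, ← ENNReal.ofReal_pow (Real.exp_pos _).le]
          congr 1
          rw [← Real.exp_nat_mul]
  -- Borel–Cantelli
  have hsum : (∑' n, P (A n)) ≠ ∞ := by
    obtain ⟨N, hN⟩ := eventually_atTop.mp hgeom
    have hbound : ∀ n, P (A n)
        ≤ Set.indicator (↑(Finset.range N) : Set ℕ) (fun _ => (1 : ℝ≥0∞)) n + r ^ n := by
      intro n
      by_cases h : n < N
      · rw [Set.indicator_of_mem (by simpa using h)]
        exact le_add_right prob_le_one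
      · rw [Set.indicator_of_notMem (by simpa using h), zero_add]
        exact hN n (le_of_not_gt h)
    have hle : (∑' n, P (A n))
        ≤ (∑' n, Set.indicator (↑(Finset.range N) : Set ℕ) (fun _ => (1 : ℝ≥0∞)) n)
          + ∑' n : ℕ, r ^ n := by
      rw [← ENNReal.tsum_add]
      exact ENNReal.tsum_le_tsum hbound
    refine ne_top_of_le_ne_top ?_ hle
    apply ENNReal.add_ne_top.mpr
    constructor
    · rw [tsum_eq_sum (s := Finset.range N)
        (fun b hb => Set.indicator_of_notMem (by simpa using hb) _)]
      refine (ENNReal.sum_lt_top.mpr fun i _ => ?_).ne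
      have : Set.indicator (↑(Finset.range N) : Set ℕ) (fun _ => (1 : ℝ≥0∞)) i ≤ 1 := by
        by_cases h : i ∈ (↑(Finset.range N) : Set ℕ) <;>
          simp [Set.indicator, h] <;> split <;> simp
      exact lt_of_le_of_lt this ENNReal.one_lt_top
    · rw [ENNReal.tsum_geometric]
      exact ENNReal.inv_ne_top.mpr (tsub_pos_of_lt hr1).ne'
  filter_upwards [ae_eventually_notMem hsum] with ω hω
  filter_upwards [hω, eventually_ge_atTop 1] with n h1 h2
  have hlt : g n ω < ENNReal.ofReal (Real.exp ((n : ℝ) * (-a))) := lt_of_not_ge h1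
  have hlog : ENNReal.log (g n ω) ≤ (((n : ℝ) * (-a) : ℝ) : EReal) := by
    have := ENNReal.log_monotone hlt.le
    rwa [ENNReal.log_ofReal_of_pos (Real.exp_pos _), Real.log_exp] at this
  have hn0 : (0 : EReal) ≤ (n : EReal) := by
    exact_mod_cast Nat.cast_nonneg n
  calc ENNReal.log (g n ω) / (n : EReal)
      ≤ (((n : ℝ) * (-a) : ℝ) : EReal) / (n : EReal) :=
        EReal.div_le_div_right_of_nonneg hn0 hlog
    _ = ((-a : ℝ) : EReal) := by
        rw [← EReal.coe_coe_eq_natCast, ← EReal.coe_div,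
          mul_comm, mul_div_assoc,
          div_self (Nat.cast_ne_zero.mpr (by omega) : ((n : ℝ) ≠ 0)), mul_one]

/-- If the annealed large deviation principle holds,
`lim (1/n) log (ℙ̃ ⊗ ν)(S_n > nε) = −c(ε)` with `c(ε) > 0`, then for `ℙ̃`-almost every `ω`,
`limsup (1/n) log ν{x : S_n(ω,x) > nε} ≤ −c(ε)` (quenched upper large deviation bound).
Here `S_n(ω,x) = ∑_{k<n} φ(T_ω^k x)` and logarithms of measures are taken in `EReal`. -/
theorem quenched_upper_large_deviation_bound
    {X Ω : Type*} [MeasurableSpace X] [MeasurableSpace Ω]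
    (T : Ω → X → X) (hT : Measurable fun q : Ω × X => T q.1 q.2)
    (Ptilde : Measure (ℕ → Ω)) [IsProbabilityMeasure Ptilde]
    (ν : Measure X) [IsProbabilityMeasure ν]
    (φ : X → ℝ) (hφm : Measurable φ)
    (ε c : ℝ) (hε : 0 < ε) (hc : 0 < c)
    -- annealed large deviation principle at `ε`
    (hLDP : Tendsto
      (fun n : ℕ => ENNReal.log
          ((Ptilde.prod ν)
            {p : (ℕ → Ω) × X |
              (n : ℝ) * ε < ∑ k ∈ Finset.range n, φ (randIter T p.1 k p.2)}) / (n : EReal))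
      atTop (nhds ((-c : ℝ) : EReal))) :
    ∀ᵐ ω ∂Ptilde,
      limsup
        (fun n : ℕ => ENNReal.log
            (ν {x : X | (n : ℝ) * ε < ∑ k ∈ Finset.range n, φ (randIter T ω k x)})
          / (n : EReal))
        atTop ≤ ((-c : ℝ) : EReal) := by
  set B : ℕ → Set ((ℕ → Ω) × X) := fun n =>
    {p : (ℕ → Ω) × X | (n : ℝ) * ε < ∑ k ∈ Finset.range n, φ (randIter T p.1 k p.2)} with hBdef
  have hB : ∀ n, MeasurableSet (B n) := by
    intro n
    apply measurableSet_lt measurable_const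
    exact Finset.measurable_sum _ fun k _ => hφm.comp (measurable_randIter T hT k)
  -- parameters aₘ = c - c/(m+2) ↑ c
  have hkey : ∀ m : ℕ, ∀ᵐ ω ∂Ptilde, ∀ᶠ n in atTop,
      ENNReal.log (ν (Prod.mk ω ⁻¹' B n)) / (n : EReal)
        ≤ ((-(c - c / ((m : ℝ) + 2)) : ℝ) : EReal) := by
    intro m
    have hm2 : (0 : ℝ) < (m : ℝ) + 2 := by positivity
    have h1 : (0 : ℝ) < c - c / ((m : ℝ) + 2) := by
      have : c / ((m : ℝ) + 2) < c := div_lt_self hc (lt_add_of_nonneg_of_lt (Nat.cast_nonneg m) one_lt_two)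
      linarith
    have h2 : c - c / ((m : ℝ) + 2) < c := by
      have : 0 < c / ((m : ℝ) + 2) := by positivity
      linarith
    exact aux_eventual_bound Ptilde ν B hB c _ h1 h2 hLDP
  have hall : ∀ᵐ ω ∂Ptilde, ∀ m : ℕ, ∀ᶠ n in atTop,
      ENNReal.log (ν (Prod.mk ω ⁻¹' B n)) / (n : EReal)
        ≤ ((-(c - c / ((m : ℝ) + 2)) : ℝ) : EReal) := ae_all_iff.mpr hkey
  filter_upwards [hall] with ω hω
  have hls : ∀ m : ℕ,
      limsup (fun n : ℕ => ENNReal.log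
          (ν {x : X | (n : ℝ) * ε < ∑ k ∈ Finset.range n, φ (randIter T ω k x)})
        / (n : EReal)) atTop ≤ ((-(c - c / ((m : ℝ) + 2)) : ℝ) : EReal) := by
    intro m
    exact limsup_le_of_le (by isBoundedDefault) (hω m)
  -- pass to the limit m → ∞
  have htend : Tendsto (fun m : ℕ => ((-(c - c / ((m : ℝ) + 2)) : ℝ) : EReal))
      atTop (nhds ((-c : ℝ) : EReal)) := by
    rw [EReal.tendsto_coe]
    have h0 : Tendsto (fun m : ℕ => c / ((m : ℝ) + 2)) atTop (nhds 0) := by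
      have h := (tendsto_const_div_atTop_nhds_zero_nat c).comp (tendsto_add_atTop_nat 2)
      refine h.congr fun m => ?_
      simp only [Function.comp_apply]
      push_cast
      ring
    have := ((tendsto_const_nhds (x := c)).sub h0).neg
    simpa using this
  exact ge_of_tendsto' htend hls
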